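/- Let y, aⁱ, aʲ : ℝ → ℝ be differentiable and let γⁱ, γʲ ∈ ℝ with sin γⁱ ≠ 0, sin γʲ ≠ 0, y nonvanishing, aⁱ, aʲ nonvanishing, aⁱ ≠ aʲ everywhere, and cot γⁱ ≠ cot γʲ. Assume the loxodrome constraints y + (aᵏ·y)' = aᵏ·y·cot γᵏ for k = i, j. Then aⁱ − aʲ + aⁱ·(aʲ)' − (aⁱ)'·aʲ is nonvanishing and the tangential map formula reduces to the algebraic expression (aⁱ − aʲ)·aⁱ / (aⁱ − aʲ + aⁱ·(aʲ)' − (aⁱ)'·aʲ) = (aⁱ/aʲ − 1)/(cot γʲ − cot γⁱ). -/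

import Mathlib

/-- Under the loxodrome constraints (ya), the denominator of the
tangential map (Ta) is nonvanishing and the map reduces to the algebraic expression
`(aⁱ/aʲ − 1)/(cot γʲ − cot γⁱ)`. -/
theorem loxodrome_tangential_map_algebraic
    (y ai aj : ℝ → ℝ) (γi γj : ℝ)
    (hy : Differentiable ℝ y) (hai : Differentiable ℝ ai) (haj : Differentiable ℝ aj)
    (hγi : Real.sin γi ≠ 0) (hγj : Real.sin γj ≠ 0)
    (hy0 : ∀ t, y t ≠ 0) (hai0 : ∀ t, ai t ≠ 0) (haj0 : ∀ t, aj t ≠ 0)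
    (hne : ∀ t, ai t ≠ aj t)
    (hcot : Real.cos γi / Real.sin γi ≠ Real.cos γj / Real.sin γj)
    (hyai : ∀ t, y t + deriv (fun s => ai s * y s) t
      = ai t * y t * (Real.cos γi / Real.sin γi))
    (hyaj : ∀ t, y t + deriv (fun s => aj s * y s) t
      = aj t * y t * (Real.cos γj / Real.sin γj)) :
    (∀ t, ai t - aj t + ai t * deriv aj t - deriv ai t * aj t ≠ 0) ∧
    (∀ t, (ai t - aj t) * ai t
        / (ai t - aj t + ai t * deriv aj t - deriv ai t * aj t)
      = (ai t / aj t - 1)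
        / (Real.cos γj / Real.sin γj - Real.cos γi / Real.sin γi)) := by
  set ci := Real.cos γi / Real.sin γi with hci
  set cj := Real.cos γj / Real.sin γj with hcj
  have hcc : cj - ci ≠ 0 := sub_ne_zero.mpr (Ne.symm hcot)
  have key : ∀ t, ai t - aj t + ai t * deriv aj t - deriv ai t * aj t
      = ai t * aj t * (cj - ci) := by
    intro t
    have hi := hyai t
    have hj := hyaj t
    rw [deriv_fun_mul (hai.differentiableAt) (hy.differentiableAt)] at hi
    rw [deriv_fun_mul (haj.differentiableAt) (hy.differentiableAt)] at hj
    have hyt := hy0 t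
    have hmul : (ai t - aj t + ai t * deriv aj t - deriv ai t * aj t) * y t
        = ai t * aj t * (cj - ci) * y t := by
      linear_combination ai t * hj - aj t * hi
    exact mul_right_cancel₀ hyt hmul
  have hD : ∀ t, ai t - aj t + ai t * deriv aj t - deriv ai t * aj t ≠ 0 := by
    intro t
    rw [key t]
    exact mul_ne_zero (mul_ne_zero (hai0 t) (haj0 t)) hcc
  refine ⟨hD, fun t => ?_⟩
  rw [key t, div_eq_div_iff (mul_ne_zero (mul_ne_zero (hai0 t) (haj0 t)) hcc) hcc,
    div_eq_mul_inv]
  linear_combination (-(ai t * ai t * (cj - ci))) * mul_inv_cancel₀ (haj0 t)
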